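/- Let Q ∈ ℝ^{d×r} satisfy QᵀQ = I_r and let F ∈ ℝ^{d×t} have full column rank t. Set P := F(FᵀF)⁻¹Fᵀ and η := det(Qᵀ(I_d − P)Q). Then η ∈ [0,1] and ‖FᵀQ‖₂ ≥ σ_min(F) · √(1 − η^{1/r}). -/

import Mathlib

open Matrix

-- helper: dot products
lemma dot_mulVec_left {m n : ℕ} (A : Matrix (Fin m) (Fin n) ℝ) (x : Fin n → ℝ) (y : Fin m → ℝ) :
    (A *ᵥ x) ⬝ᵥ y = x ⬝ᵥ (Aᵀ *ᵥ y) := by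
  rw [dotProduct_comm, dotProduct_mulVec, dotProduct_comm, mulVec_transpose]

lemma euclid_dot {n : ℕ} (x y : EuclideanSpace ℝ (Fin n)) :
    (inner ℝ x y : ℝ) = (⇑x) ⬝ᵥ (⇑y) := by
  simp [PiLp.inner_apply, RCLike.inner_apply, dotProduct, conj_trivial]
  exact Finset.sum_congr rfl fun _ _ => mul_comm _ _

lemma euclid_norm {n : ℕ} (x : EuclideanSpace ℝ (Fin n)) :
    ‖x‖ = Real.sqrt ((⇑x) ⬝ᵥ (⇑x)) := by
  rw [norm_eq_sqrt_real_inner, euclid_dot]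

-- Rayleigh lower bound
lemma rayleigh_lower {n : ℕ} {A : Matrix (Fin n) (Fin n) ℝ} (hA : A.IsHermitian)
    (x : Fin n → ℝ) :
    (⨅ i, hA.eigenvalues i) * (x ⬝ᵥ x) ≤ x ⬝ᵥ (A *ᵥ x) := by
  classical
  set U : Matrix (Fin n) (Fin n) ℝ := (hA.eigenvectorUnitary : Matrix (Fin n) (Fin n) ℝ) with hU
  have hUs : star U * U = 1 := Unitary.star_mul_self_of_mem hA.eigenvectorUnitary.2
  have hUs' : U * star U = 1 := Unitary.mul_star_self_of_mem hA.eigenvectorUnitary.2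
  set c : Fin n → ℝ := star U *ᵥ x with hc
  have hstarU : star U = Uᵀ := by
    rw [Matrix.star_eq_conjTranspose, conjTranspose_eq_transpose_of_trivial]
  have h1 : x ⬝ᵥ (A *ᵥ x) = ∑ i, hA.eigenvalues i * (c i * c i) := by
    conv_lhs => rw [hA.spectral_theorem, Unitary.conjStarAlgAut_apply]
    rw [← mulVec_mulVec, ← mulVec_mulVec, dotProduct_mulVec]
    have hxU : x ᵥ* U = c := by rw [hc, hstarU, mulVec_transpose]
    rw [hxU]
    simp only [dotProduct, mulVec_diagonal, Function.comp_apply, RCLike.ofReal_real_eq_id,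
      id_eq]
    refine Finset.sum_congr rfl fun i _ => ?_
    ring
  have h2 : x ⬝ᵥ x = ∑ i, c i * c i := by
    have : (c : Fin n → ℝ) ⬝ᵥ c = x ⬝ᵥ x := by
      rw [hc, hstarU, dot_mulVec_left, transpose_transpose, mulVec_mulVec, ← hstarU, hUs',
        one_mulVec]
    rw [← this]; rfl
  rw [h1, h2, Finset.mul_sum]
  refine Finset.sum_le_sum fun i _ => ?_
  have hle : (⨅ j, hA.eigenvalues j) ≤ hA.eigenvalues i :=
    ciInf_le (Set.Finite.bddBelow (Set.finite_range _)) i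
  have : (0:ℝ) ≤ c i * c i := mul_self_nonneg _
  nlinarith


/-- The spectral norm (largest singular value) of a real matrix, as the operator norm of the
induced linear map between Euclidean spaces. -/
noncomputable def specNorm {m n : ℕ} (A : Matrix (Fin m) (Fin n) ℝ) : ℝ :=
  ‖LinearMap.toContinuousLinearMap (Matrix.toEuclideanLin A)‖

/-- The smallest singular value of a real matrix: the square root of the smallest eigenvalue of
`AᵀA` (`= AᴴA` over `ℝ`). -/
noncomputable def sigmaMin {m n : ℕ} (A : Matrix (Fin m) (Fin n) ℝ) : ℝ :=
  Real.sqrt (⨅ i, (Matrix.isHermitian_conjTranspose_mul_self A).eigenvalues i)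

/-- Let `Q ∈ ℝ^{d×r}` with `QᵀQ = I_r` and let `F ∈ ℝ^{d×t}` have full column
rank.  With `P = F(FᵀF)⁻¹Fᵀ` and `η = det(Qᵀ(I − P)Q)`, we have `η ∈ [0,1]` and
`‖FᵀQ‖₂ ≥ σ_min(F) · √(1 − η^{1/r})`. -/
theorem specNorm_transpose_mul_ge_of_orthonormal
    {d r t : ℕ} (Q : Matrix (Fin d) (Fin r) ℝ) (F : Matrix (Fin d) (Fin t) ℝ)
    (hQ : Qᵀ * Q = 1) (hF : F.rank = t) :
    0 ≤ (Qᵀ * ((1 : Matrix (Fin d) (Fin d) ℝ) - F * (Fᵀ * F)⁻¹ * Fᵀ) * Q).det ∧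
    (Qᵀ * ((1 : Matrix (Fin d) (Fin d) ℝ) - F * (Fᵀ * F)⁻¹ * Fᵀ) * Q).det ≤ 1 ∧
    sigmaMin F *
      Real.sqrt (1 -
        (Qᵀ * ((1 : Matrix (Fin d) (Fin d) ℝ) - F * (Fᵀ * F)⁻¹ * Fᵀ) * Q).det ^ ((1 : ℝ) / r)) ≤
      specNorm (Fᵀ * Q) := by
  classical
  have hG : (Fᵀ * F).IsHermitian := isHermitian_conjTranspose_mul_self F
  -- invertibility of Fᵀ * F
  have hFinj : Function.Injective F.mulVecLin := by
    rw [← LinearMap.ker_eq_bot, ← Submodule.finrank_eq_zero]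
    have h1 := F.mulVecLin.finrank_range_add_finrank_ker
    have h2 : Module.finrank ℝ (Fin t → ℝ) = t := by simp
    have h3 : Module.finrank ℝ (LinearMap.range F.mulVecLin) = t := hF
    omega
  have hGinj : Function.Injective (Fᵀ * F).mulVecLin := by
    rw [← LinearMap.ker_eq_bot, ker_mulVecLin_transpose_mul_self, LinearMap.ker_eq_bot]
    exact hFinj
  have hGunit : IsUnit (Fᵀ * F) := by
    rw [← Matrix.mulVec_injective_iff_isUnit]
    exact hGinj
  have hGdet : IsUnit (Fᵀ * F).det := (Matrix.isUnit_iff_isUnit_det _).mp hGunit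
  have hGG : (Fᵀ * F) * (Fᵀ * F)⁻¹ = 1 := Matrix.mul_nonsing_inv _ hGdet
  have hGt : (Fᵀ * F)ᵀ = Fᵀ * F := by rw [transpose_mul, transpose_transpose]
  have hGinvT : ((Fᵀ * F)⁻¹)ᵀ = (Fᵀ * F)⁻¹ := by
    rw [Matrix.transpose_nonsing_inv, hGt]
  set P : Matrix (Fin d) (Fin d) ℝ := F * (Fᵀ * F)⁻¹ * Fᵀ with hPdef
  have hPt : Pᵀ = P := by
    rw [hPdef, transpose_mul, transpose_mul, transpose_transpose, hGinvT]
    simp only [Matrix.mul_assoc]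
  have hFtP : Fᵀ * P = Fᵀ := by
    rw [hPdef]
    simp only [← Matrix.mul_assoc]
    rw [hGG, Matrix.one_mul]
  have hPP : P * P = P := by
    rw [hPdef]
    calc F * (Fᵀ * F)⁻¹ * Fᵀ * (F * (Fᵀ * F)⁻¹ * Fᵀ)
        = F * ((Fᵀ * F)⁻¹ * (Fᵀ * F)) * ((Fᵀ * F)⁻¹ * Fᵀ) := by simp only [Matrix.mul_assoc]
      _ = F * (Fᵀ * F)⁻¹ * Fᵀ := by
          rw [Matrix.nonsing_inv_mul _ hGdet, Matrix.mul_one]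
          simp only [Matrix.mul_assoc]
  set E : Matrix (Fin d) (Fin d) ℝ := 1 - P with hEdef
  have hEt : Eᵀ = E := by rw [hEdef, transpose_sub, transpose_one, hPt]
  have hEE : E * E = E := by
    rw [hEdef, sub_mul, one_mul, mul_sub, mul_one, hPP, sub_self, sub_zero]
  have hEpsd : E.PosSemidef := by
    have := posSemidef_conjTranspose_mul_self E
    rwa [conjTranspose_eq_transpose_of_trivial, hEt, hEE] at this
  set M : Matrix (Fin r) (Fin r) ℝ := Qᵀ * E * Q with hMdef
  have hMpsd : M.PosSemidef := by
    have := hEpsd.conjTranspose_mul_mul_same Q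
    rwa [conjTranspose_eq_transpose_of_trivial] at this
  have hMherm : M.IsHermitian := hMpsd.1
  have hPpsd : (Qᵀ * P * Q).PosSemidef := by
    have hP2 : P.PosSemidef := by
      have := posSemidef_conjTranspose_mul_self P
      rwa [conjTranspose_eq_transpose_of_trivial, hPt, hPP] at this
    have := hP2.conjTranspose_mul_mul_same Q
    rwa [conjTranspose_eq_transpose_of_trivial] at this
  have hMsum : Qᵀ * P * Q = 1 - M := by
    rw [hMdef, hEdef, Matrix.mul_sub, Matrix.mul_one, Matrix.sub_mul, hQ, sub_sub_cancel]
  -- eigenvalues of M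
  have heig0 : ∀ i, 0 ≤ hMherm.eigenvalues i := hMpsd.eigenvalues_nonneg
  have hdot1 : ∀ i : Fin r, (⇑(hMherm.eigenvectorBasis i)) ⬝ᵥ (⇑(hMherm.eigenvectorBasis i)) = 1 := by
    intro i
    have hn : ‖hMherm.eigenvectorBasis i‖ = 1 := hMherm.eigenvectorBasis.orthonormal.1 i
    have := euclid_dot (hMherm.eigenvectorBasis i) (hMherm.eigenvectorBasis i)
    rw [← this, real_inner_self_eq_norm_sq, hn]; norm_num
  have heig1 : ∀ i, hMherm.eigenvalues i ≤ 1 := by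
    intro i
    set v : Fin r → ℝ := ⇑(hMherm.eigenvectorBasis i) with hv
    have hMv : M *ᵥ v = hMherm.eigenvalues i • v := hMherm.mulVec_eigenvectorBasis i
    have h0 := hPpsd.dotProduct_mulVec_nonneg v
    rw [hMsum] at h0
    have : (1 - M) *ᵥ v = (1 - hMherm.eigenvalues i) • v := by
      rw [Matrix.sub_mulVec, one_mulVec, hMv, sub_smul, one_smul]
    rw [this] at h0
    simp only [star_trivial, dotProduct_smul, smul_eq_mul, hv, hdot1 i, mul_one] at h0
    linarith
  have hdet : M.det = ∏ i, hMherm.eigenvalues i := by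
    simpa [RCLike.ofReal_real_eq_id] using hMherm.det_eq_prod_eigenvalues
  have hspecnn : 0 ≤ specNorm (Fᵀ * Q) := norm_nonneg _
  refine ⟨?_, ?_, ?_⟩
  · rw [hdet]
    exact Finset.prod_nonneg fun i _ => heig0 i
  · rw [hdet]
    exact Finset.prod_le_one (fun i _ => heig0 i) (fun i _ => heig1 i)
  rcases Nat.eq_zero_or_pos r with hr | hr
  · subst hr
    have hM1 : M.det = 1 := Matrix.det_isEmpty
    rw [hM1, Real.one_rpow, sub_self, Real.sqrt_zero, mul_zero]
    exact hspecnn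
  by_cases hsle : sigmaMin F ≤ 0
  · have h0 : sigmaMin F = 0 := le_antisymm hsle (Real.sqrt_nonneg _)
    rw [h0, zero_mul]
    exact hspecnn
  push_neg at hsle
  set m : ℝ := ⨅ i, hG.eigenvalues i with hm
  have hsig : sigmaMin F = Real.sqrt m := rfl
  have hmpos : 0 < m := Real.sqrt_pos.mp (by rwa [hsig] at hsle)
  obtain ⟨i₀, -, hi₀⟩ :=
    Finset.exists_min_image Finset.univ hMherm.eigenvalues ⟨⟨0, hr⟩, Finset.mem_univ _⟩
  set μ : ℝ := hMherm.eigenvalues i₀ with hμ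
  have hμ0 : 0 ≤ μ := heig0 i₀
  have hμ1 : μ ≤ 1 := heig1 i₀
  have hμdet : μ ≤ M.det ^ ((1:ℝ)/r) := by
    have hpow : μ ^ r ≤ M.det := by
      rw [hdet]
      calc μ ^ r = ∏ _j : Fin r, μ := by simp [Finset.prod_const, Finset.card_univ]
        _ ≤ ∏ j, hMherm.eigenvalues j :=
            Finset.prod_le_prod (fun _ _ => hμ0) (fun j _ => hi₀ j (Finset.mem_univ j))
    have h1 : ((μ ^ r : ℝ)) ^ ((1:ℝ)/r) ≤ M.det ^ ((1:ℝ)/r) :=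
      Real.rpow_le_rpow (by positivity) hpow (by positivity)
    refine le_trans (le_of_eq ?_) h1
    rw [← Real.rpow_natCast μ r, ← Real.rpow_mul hμ0, mul_one_div,
      div_self (by exact_mod_cast hr.ne' : (r:ℝ) ≠ 0), Real.rpow_one]
  set v : Fin r → ℝ := ⇑(hMherm.eigenvectorBasis i₀) with hvdef
  have hMv : M *ᵥ v = μ • v := hMherm.mulVec_eigenvectorBasis i₀
  set u : Fin d → ℝ := Q *ᵥ v with hudef
  set z : Fin t → ℝ := Fᵀ *ᵥ u with hzdef
  set w : Fin t → ℝ := (Fᵀ * F)⁻¹ *ᵥ z with hwdef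
  have hvv : v ⬝ᵥ v = 1 := hdot1 i₀
  have huu : u ⬝ᵥ u = 1 := by
    rw [hudef, dot_mulVec_left, Matrix.mulVec_mulVec, hQ, Matrix.one_mulVec, hvv]
  have hMuE : u ⬝ᵥ (E *ᵥ u) = μ := by
    conv_lhs => rw [hudef, Matrix.mulVec_mulVec, dot_mulVec_left, Matrix.mulVec_mulVec,
      ← Matrix.mul_assoc, ← hMdef, hMv]
    rw [dotProduct_smul, smul_eq_mul, hvv, mul_one]
  have hPu : u ⬝ᵥ (P *ᵥ u) = 1 - μ := by
    have hEu : E *ᵥ u = u - P *ᵥ u := by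
      rw [hEdef, Matrix.sub_mulVec, Matrix.one_mulVec]
    have h2 := hMuE
    rw [hEu, dotProduct_sub, huu] at h2
    linarith
  have hPuF : P *ᵥ u = F *ᵥ w := by
    rw [hPdef, ← Matrix.mulVec_mulVec, ← Matrix.mulVec_mulVec, ← hzdef, ← hwdef]
  have hFww : (F *ᵥ w) ⬝ᵥ (F *ᵥ w) = 1 - μ := by
    rw [← hPuF, dot_mulVec_left, Matrix.mulVec_mulVec, hPt, hPP]
    exact hPu
  have hwz : w ⬝ᵥ z = 1 - μ := by
    have h3 := dot_mulVec_left F w u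
    rw [← hzdef] at h3
    rw [← h3, ← hPuF, dotProduct_comm]
    exact hPu
  have hzv : z = (Fᵀ * Q) *ᵥ v := by
    rw [hzdef, hudef, Matrix.mulVec_mulVec]
  have hWnn : 0 ≤ w ⬝ᵥ w := Finset.sum_nonneg fun i _ => mul_self_nonneg _
  have hZnn : 0 ≤ z ⬝ᵥ z := Finset.sum_nonneg fun i _ => mul_self_nonneg _
  have hray : m * (w ⬝ᵥ w) ≤ 1 - μ := by
    have h := rayleigh_lower hG w
    rw [← Matrix.mulVec_mulVec, ← dot_mulVec_left, hFww] at h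
    exact h
  have hCS : (w ⬝ᵥ z)^2 ≤ (w ⬝ᵥ w) * (z ⬝ᵥ z) := by
    have h := Finset.sum_mul_sq_le_sq_mul_sq Finset.univ w z
    simpa [dotProduct, sq] using h
  have hzz : m * (1 - μ) ≤ z ⬝ᵥ z := by
    rcases eq_or_lt_of_le (by linarith : (0:ℝ) ≤ 1 - μ) with hμeq | hμlt
    · rw [← hμeq, mul_zero]
      exact hZnn
    · rw [hwz] at hCS
      nlinarith [hray, hCS, mul_pos hmpos hμlt]
  have hnormv : ‖hMherm.eigenvectorBasis i₀‖ = 1 := hMherm.eigenvectorBasis.orthonormal.1 i₀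
  set L := LinearMap.toContinuousLinearMap (Matrix.toEuclideanLin (Fᵀ * Q)) with hL
  have hLv : ‖L (hMherm.eigenvectorBasis i₀)‖ = Real.sqrt (z ⬝ᵥ z) := by
    rw [euclid_norm]
    have hfun : ⇑(L (hMherm.eigenvectorBasis i₀)) = (Fᵀ * Q) *ᵥ v := rfl
    rw [hfun, ← hzv]
  calc sigmaMin F * Real.sqrt (1 - M.det ^ ((1:ℝ)/r))
      ≤ sigmaMin F * Real.sqrt (1 - μ) := by
        apply mul_le_mul_of_nonneg_left (Real.sqrt_le_sqrt (by linarith)) hsle.le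
    _ = Real.sqrt (m * (1 - μ)) := by
        rw [hsig, ← Real.sqrt_mul hmpos.le]
    _ ≤ Real.sqrt (z ⬝ᵥ z) := Real.sqrt_le_sqrt hzz
    _ = ‖L (hMherm.eigenvectorBasis i₀)‖ := hLv.symm
    _ ≤ specNorm (Fᵀ * Q) := by
        have h := L.le_opNorm (hMherm.eigenvectorBasis i₀)
        rw [hnormv, mul_one] at h
        exact h
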